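/- Let G be a locally finite graph with positive symmetric edge weights ℓ, and let {i,j} be an edge at which the tree equation of motion holds. Suppose that the lengths of the edge {i,j} and of all edges adjacent to it (i.e., all other edges incident to i or to j) are not all equal. Then there exists an edge adjacent to {i,j} whose length is strictly greater than ℓ(i,j), and there exists an edge adjacent to {i,j} whose length is strictly less than ℓ(i,j); in particular {i,j} is neither of maximum nor of minimum length among itself and its adjacent edges. -/

import Mathlib

open Finset

/-- `cv G ℓ i = Σ_{k ∼ i} 1/ℓ(i,k)`. -/
noncomputable def cv {V : Type*} (G : SimpleGraph V) [G.LocallyFinite]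
    (ℓ : V → V → ℝ) (i : V) : ℝ :=
  ∑ k ∈ G.neighborFinset i, (ℓ i k)⁻¹

/-- `dv G ℓ i = Σ_{k ∼ i} 1/ℓ(i,k)²`. -/
noncomputable def dv {V : Type*} (G : SimpleGraph V) [G.LocallyFinite]
    (ℓ : V → V → ℝ) (i : V) : ℝ :=
  ∑ k ∈ G.neighborFinset i, ((ℓ i k)⁻¹) ^ 2

/-- The tree equation of motion at the edge `{i,j}`:
`(1/ℓ(i,j))·(c_i²/d_i² + c_j²/d_j²) − c_i/d_i − c_j/d_j = 0`. -/
def tEoM {V : Type*} (G : SimpleGraph V) [G.LocallyFinite]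
    (ℓ : V → V → ℝ) (i j : V) : Prop :=
  (ℓ i j)⁻¹ * ((cv G ℓ i / dv G ℓ i) ^ 2 + (cv G ℓ j / dv G ℓ j) ^ 2)
    - cv G ℓ i / dv G ℓ i - cv G ℓ j / dv G ℓ j = 0

lemma mean_strict {ι : Type*} (s : Finset ι) (w v : ι → ℝ)
    (hw : ∀ k ∈ s, 0 < w k)
    (a : ℝ) (hsum : ∑ k ∈ s, w k * (v k - a) = 0)
    (k₀ : ι) (hk₀ : k₀ ∈ s) (hne : v k₀ ≠ a) :
    (∃ k ∈ s, a < v k) ∧ (∃ k ∈ s, v k < a) := by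
  constructor
  · by_contra h
    push_neg at h
    have hz : ∀ k ∈ s, w k * (v k - a) = 0 := by
      rw [← Finset.sum_eq_zero_iff_of_nonpos]
      · exact hsum
      · intro k hk
        exact mul_nonpos_of_nonneg_of_nonpos (hw k hk).le (by linarith [h k hk])
    have := hz k₀ hk₀
    have hwne : w k₀ ≠ 0 := (hw k₀ hk₀).ne'
    have : v k₀ - a = 0 := by
      rcases mul_eq_zero.mp this with h1 | h1
      · exact absurd h1 hwne
      · exact h1
    exact hne (by linarith)
  · by_contra h
    push_neg at h
    have hz : ∀ k ∈ s, w k * (v k - a) = 0 := by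
      rw [← Finset.sum_eq_zero_iff_of_nonneg]
      · exact hsum
      · intro k hk
        exact mul_nonneg (hw k hk).le (by linarith [h k hk])
    have := hz k₀ hk₀
    have hwne : w k₀ ≠ 0 := (hw k₀ hk₀).ne'
    have : v k₀ - a = 0 := by
      rcases mul_eq_zero.mp this with h1 | h1
      · exact absurd h1 hwne
      · exact h1
    exact hne (by linarith)

lemma vertex_strict {V : Type*} (G : SimpleGraph V) [G.LocallyFinite] (ℓ : V → V → ℝ)
    (hpos : ∀ u v, G.Adj u v → 0 < ℓ u v) (i k₀ : V) (h0 : G.Adj i k₀)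
    (hne : ℓ i k₀ ≠ cv G ℓ i / dv G ℓ i) :
    (∃ k, G.Adj i k ∧ cv G ℓ i / dv G ℓ i < ℓ i k) ∧
    (∃ k, G.Adj i k ∧ ℓ i k < cv G ℓ i / dv G ℓ i) := by
  have hk₀mem : k₀ ∈ G.neighborFinset i := by rwa [SimpleGraph.mem_neighborFinset]
  have hposk : ∀ k ∈ G.neighborFinset i, 0 < ℓ i k := fun k hk =>
    hpos i k ((SimpleGraph.mem_neighborFinset _ _ _).mp hk)
  have hd : 0 < dv G ℓ i := by
    apply Finset.sum_pos (fun k hk => by have := hposk k hk; positivity) ⟨k₀, hk₀mem⟩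
  have hsum : ∑ k ∈ G.neighborFinset i,
      ((ℓ i k)⁻¹) ^ 2 * (ℓ i k - cv G ℓ i / dv G ℓ i) = 0 := by
    have heq : ∑ k ∈ G.neighborFinset i,
        ((ℓ i k)⁻¹) ^ 2 * (ℓ i k - cv G ℓ i / dv G ℓ i)
        = cv G ℓ i - (cv G ℓ i / dv G ℓ i) * dv G ℓ i := by
      rw [cv, dv, Finset.mul_sum, ← Finset.sum_sub_distrib]
      apply Finset.sum_congr rfl
      intro k hk
      have hℓ : ℓ i k ≠ 0 := (hposk k hk).ne'
      have h1 : ((ℓ i k)⁻¹) ^ 2 * ℓ i k = (ℓ i k)⁻¹ := by field_simp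
      rw [mul_sub, h1]
      ring
    rw [heq]
    field_simp; ring
  obtain ⟨⟨k₁, hk₁, h1⟩, ⟨k₂, hk₂, h2⟩⟩ := mean_strict (G.neighborFinset i)
    (fun k => ((ℓ i k)⁻¹) ^ 2) (fun k => ℓ i k)
    (fun k hk => by have := hposk k hk; positivity)
    (cv G ℓ i / dv G ℓ i) hsum k₀ hk₀mem hne
  exact ⟨⟨k₁, (SimpleGraph.mem_neighborFinset _ _ _).mp hk₁, h1⟩,
    ⟨k₂, (SimpleGraph.mem_neighborFinset _ _ _).mp hk₂, h2⟩⟩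

lemma cvdv_pos {V : Type*} (G : SimpleGraph V) [G.LocallyFinite] (ℓ : V → V → ℝ)
    (hpos : ∀ u v, G.Adj u v → 0 < ℓ u v) (i k₀ : V) (h0 : G.Adj i k₀) :
    0 < cv G ℓ i / dv G ℓ i := by
  have hk₀mem : k₀ ∈ G.neighborFinset i := by rwa [SimpleGraph.mem_neighborFinset]
  have hposk : ∀ k ∈ G.neighborFinset i, 0 < ℓ i k := fun k hk =>
    hpos i k ((SimpleGraph.mem_neighborFinset _ _ _).mp hk)
  have hd : 0 < dv G ℓ i :=
    Finset.sum_pos (fun k hk => by have := hposk k hk; positivity) ⟨k₀, hk₀mem⟩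
  have hc : 0 < cv G ℓ i :=
    Finset.sum_pos (fun k hk => by have := hposk k hk; positivity) ⟨k₀, hk₀mem⟩
  positivity

theorem eom_edge_not_extremal {V : Type*} (G : SimpleGraph V) [G.LocallyFinite]
    (ℓ : V → V → ℝ) (hsymm : ∀ u v, ℓ u v = ℓ v u)
    (hpos : ∀ u v, G.Adj u v → 0 < ℓ u v)
    (i j : V) (hadj : G.Adj i j)
    (heom : tEoM G ℓ i j)
    (hne : ¬ ((∀ k, G.Adj i k → ℓ i k = ℓ i j) ∧ (∀ k, G.Adj j k → ℓ j k = ℓ i j))) :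
    (∃ k, (G.Adj i k ∧ k ≠ j ∧ ℓ i j < ℓ i k) ∨ (G.Adj j k ∧ k ≠ i ∧ ℓ i j < ℓ j k)) ∧
    (∃ k, (G.Adj i k ∧ k ≠ j ∧ ℓ i k < ℓ i j) ∨ (G.Adj j k ∧ k ≠ i ∧ ℓ j k < ℓ i j)) := by
  set a := cv G ℓ i / dv G ℓ i with ha
  set b := cv G ℓ j / dv G ℓ j with hb
  have hx : 0 < ℓ i j := hpos i j hadj
  have hji : ℓ j i = ℓ i j := (hsymm i j).symm
  have hapos : 0 < a := cvdv_pos G ℓ hpos i j hadj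
  have hbpos : 0 < b := cvdv_pos G ℓ hpos j i hadj.symm
  have key : a ^ 2 + b ^ 2 = ℓ i j * (a + b) := by
    have h := heom
    rw [tEoM, ← ha, ← hb] at h
    have hxne : ℓ i j ≠ 0 := hx.ne'
    field_simp at h
    linarith
  rcases lt_trichotomy a b with hab | hab | hab
  · -- a < ℓ i j < b
    have hax : a < ℓ i j := by nlinarith
    have hxb : ℓ i j < b := by nlinarith
    obtain ⟨_, k₂, hk₂adj, hk₂⟩ := vertex_strict G ℓ hpos i j hadj (by rw [← ha]; exact hax.ne')
    obtain ⟨⟨k₁, hk₁adj, hk₁⟩, _⟩ := vertex_strict G ℓ hpos j i hadj.symm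
      (by rw [← hb, hji]; exact hxb.ne)
    refine ⟨⟨k₁, Or.inr ⟨hk₁adj, ?_, by linarith⟩⟩, ⟨k₂, Or.inl ⟨hk₂adj, ?_, by linarith⟩⟩⟩
    · rintro rfl; rw [hji] at hk₁; linarith
    · rintro rfl; linarith
  · -- a = b = ℓ i j
    have hxa : ℓ i j = a := by nlinarith
    rw [not_and_or] at hne
    push_neg at hne
    rcases hne with ⟨k₀, hk₀adj, hk₀⟩ | ⟨k₀, hk₀adj, hk₀⟩
    · obtain ⟨⟨k₁, hk₁adj, hk₁⟩, k₂, hk₂adj, hk₂⟩ :=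
        vertex_strict G ℓ hpos i k₀ hk₀adj (by rw [← ha, ← hxa]; exact hk₀)
      have hgt : ℓ i j < ℓ i k₁ := hxa.trans_lt hk₁
      have hlt : ℓ i k₂ < ℓ i j := hk₂.trans_eq hxa.symm
      refine ⟨⟨k₁, Or.inl ⟨hk₁adj, ?_, hgt⟩⟩, ⟨k₂, Or.inl ⟨hk₂adj, ?_, hlt⟩⟩⟩
      · rintro rfl; linarith
      · rintro rfl; linarith
    · obtain ⟨⟨k₁, hk₁adj, hk₁⟩, k₂, hk₂adj, hk₂⟩ :=
        vertex_strict G ℓ hpos j k₀ hk₀adj (by rw [← hb, ← hab, ← hxa]; exact hk₀)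
      have hxb : ℓ i j = b := by rw [hxa, hab]
      have hgt : ℓ i j < ℓ j k₁ := hxb.trans_lt hk₁
      have hlt : ℓ j k₂ < ℓ i j := hk₂.trans_eq hxb.symm
      refine ⟨⟨k₁, Or.inr ⟨hk₁adj, ?_, hgt⟩⟩, ⟨k₂, Or.inr ⟨hk₂adj, ?_, hlt⟩⟩⟩
      · rintro rfl; rw [hji] at hk₁; linarith
      · rintro rfl; rw [hji] at hk₂; linarith
  · -- b < ℓ i j < a
    have hbx : b < ℓ i j := by nlinarith
    have hxa : ℓ i j < a := by nlinarith
    obtain ⟨⟨k₁, hk₁adj, hk₁⟩, _⟩ := vertex_strict G ℓ hpos i j hadj (by rw [← ha]; exact hxa.ne)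
    obtain ⟨_, k₂, hk₂adj, hk₂⟩ := vertex_strict G ℓ hpos j i hadj.symm
      (by rw [← hb, hji]; exact hbx.ne')
    refine ⟨⟨k₁, Or.inl ⟨hk₁adj, ?_, by linarith⟩⟩, ⟨k₂, Or.inr ⟨hk₂adj, ?_, by linarith⟩⟩⟩
    · rintro rfl; linarith
    · rintro rfl; rw [hji] at hk₂; linarith
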